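/- Hamiltonian flows are symplectomorphisms, in the following form on standard symplectic ℝ²ⁿ. Let V = (EuclideanSpace ℝ (Fin n)) × (EuclideanSpace ℝ (Fin n)) with the standard symplectic form ω((x, y), (x', y')) = ⟪x, y'⟫ − ⟪y, x'⟫. Let H : V → ℝ be twice continuously differentiable, and let X_H : V → V be its Hamiltonian vector field, characterized by ω(X_H p, v) = (fderiv ℝ H p) v for all p, v ∈ V (explicitly X_H (x, y) = (∇_y H, −∇_x H)). Suppose φ : ℝ → V → V is a flow of X_H that is continuously differentiable in (t, p), i.e. φ 0 = id and for all t and p the derivative in t of s ↦ φ s p at t equals X_H (φ t p). Then for every t, every p ∈ V and all tangent vectors v, w ∈ V, ω((fderiv ℝ (φ t) p) v, (fderiv ℝ (φ t) p) w) = ω(v, w); that is, each time-t map φ t preserves ω. -/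

import Mathlib

open scoped RealInnerProductSpace

/-- The standard symplectic form on `ℝ²ⁿ = ℝⁿ × ℝⁿ`:
`ω((x, y), (x', y')) = ⟪x, y'⟫ − ⟪y, x'⟫`. -/
noncomputable def stdSymplecticForm (n : ℕ)
    (p q : EuclideanSpace ℝ (Fin n) × EuclideanSpace ℝ (Fin n)) : ℝ :=
  ⟪p.1, q.2⟫ - ⟪p.2, q.1⟫


section aux
variable {n : ℕ}
local notation "E" => EuclideanSpace ℝ (Fin n)
local notation "V" => EuclideanSpace ℝ (Fin n) × EuclideanSpace ℝ (Fin n)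

lemma omega_skew (p q : V) : stdSymplecticForm n p q = - stdSymplecticForm n q p := by
  simp only [stdSymplecticForm]
  rw [real_inner_comm p.1 q.2, real_inner_comm p.2 q.1]; ring

lemma omega_sub_left (a b v : V) :
    stdSymplecticForm n (a - b) v = stdSymplecticForm n a v - stdSymplecticForm n b v := by
  simp only [stdSymplecticForm, Prod.fst_sub, Prod.snd_sub, inner_sub_left]; ring

lemma omega_nondeg (a : V) (h : ∀ v : V, stdSymplecticForm n a v = 0) : a = 0 := by
  have h1 := h (-a.2, a.1)
  simp only [stdSymplecticForm, inner_neg_right] at h1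
  have h2 : ⟪a.1, a.1⟫ + ⟪a.2, a.2⟫ = 0 := by linarith
  have n1 := real_inner_self_nonneg (x := a.1)
  have n2 := real_inner_self_nonneg (x := a.2)
  have e1 : (⟪a.1, a.1⟫ : ℝ) = 0 := by linarith
  have e2 : (⟪a.2, a.2⟫ : ℝ) = 0 := by linarith
  have : a.1 = 0 := by rwa [inner_self_eq_zero] at e1
  have : a.2 = 0 := by rwa [inner_self_eq_zero] at e2
  ext <;> simp_all [Prod.ext_iff]

/-- `ω(·, b)` as a continuous linear map. -/
noncomputable def omegaR (b : V) : V →L[ℝ] ℝ :=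
  ((innerSL ℝ b.2).comp (ContinuousLinearMap.fst ℝ E E))
    - ((innerSL ℝ b.1).comp (ContinuousLinearMap.snd ℝ E E))

lemma omegaR_apply (b a : V) : omegaR b a = stdSymplecticForm n a b := by
  simp only [omegaR, stdSymplecticForm, ContinuousLinearMap.sub_apply,
    ContinuousLinearMap.comp_apply, ContinuousLinearMap.coe_fst', ContinuousLinearMap.coe_snd',
    innerSL_apply_apply]
  rw [real_inner_comm b.2 a.1, real_inner_comm b.1 a.2]

end aux

section ham
variable {n : ℕ}
local notation "E" => EuclideanSpace ℝ (Fin n)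
local notation "V" => EuclideanSpace ℝ (Fin n) × EuclideanSpace ℝ (Fin n)

lemma xh_smooth (H : V → ℝ) (hH : ContDiff ℝ 2 H) (XH : V → V)
    (hXH : ∀ p v, stdSymplecticForm n (XH p) v = fderiv ℝ H p v) : ContDiff ℝ 1 XH := by
  have h1 : ContDiff ℝ 1 (fderiv ℝ H) := hH.fderiv_right le_rfl
  have hXeq : XH = fun q : V =>
      ((((InnerProductSpace.toDual ℝ E).symm
          ((fderiv ℝ H q).comp (ContinuousLinearMap.inr ℝ E E))),
      -((InnerProductSpace.toDual ℝ E).symm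
          ((fderiv ℝ H q).comp (ContinuousLinearMap.inl ℝ E E)))) : V) := by
    funext q
    set g2 := (InnerProductSpace.toDual ℝ E).symm
      ((fderiv ℝ H q).comp (ContinuousLinearMap.inr ℝ E E)) with hg2
    set g1 := (InnerProductSpace.toDual ℝ E).symm
      ((fderiv ℝ H q).comp (ContinuousLinearMap.inl ℝ E E)) with hg1
    have key : ∀ v : V, stdSymplecticForm n (XH q - (g2, -g1)) v = 0 := by
      intro v
      rw [omega_sub_left, hXH]
      have e2 : ⟪g2, v.2⟫ = fderiv ℝ H q (0, v.2) := by
        rw [hg2, InnerProductSpace.toDual_symm_apply]; simp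
      have e1 : ⟪g1, v.1⟫ = fderiv ℝ H q (v.1, 0) := by
        rw [hg1, InnerProductSpace.toDual_symm_apply]; simp
      have hv : v = (v.1, 0) + (0, v.2) := by simp
      have : fderiv ℝ H q v = fderiv ℝ H q (v.1, 0) + fderiv ℝ H q (0, v.2) := by
        conv_lhs => rw [hv]
        exact map_add _ _ _
      simp only [stdSymplecticForm, this, inner_neg_left]
      rw [e1, e2]; ring
    have := omega_nondeg _ key
    have := sub_eq_zero.mp this
    simpa using this
  rw [hXeq]
  exact ((((InnerProductSpace.toDual ℝ E).symm.contDiff).comp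
      (h1.clm_comp contDiff_const)).prodMk
    ((((InnerProductSpace.toDual ℝ E).symm.contDiff).comp
      (h1.clm_comp contDiff_const)).neg))

lemma omega_fderiv_XH (H : V → ℝ) (hH : ContDiff ℝ 2 H) (XH : V → V)
    (hXH : ∀ p v, stdSymplecticForm n (XH p) v = fderiv ℝ H p v) (q a b : V) :
    stdSymplecticForm n (fderiv ℝ XH q a) b = fderiv ℝ (fderiv ℝ H) q a b := by
  have hX1 : ContDiff ℝ 1 XH := xh_smooth H hH XH hXH
  have hXd : DifferentiableAt ℝ XH q := (hX1.differentiable one_ne_zero) q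
  have hH1 : ContDiff ℝ 1 (fderiv ℝ H) := hH.fderiv_right le_rfl
  have hfd : HasFDerivAt (fderiv ℝ H) (fderiv ℝ (fderiv ℝ H) q) q :=
    ((hH1.differentiable one_ne_zero) q).hasFDerivAt
  have e1 : HasFDerivAt (fun q => omegaR b (XH q)) ((omegaR b).comp (fderiv ℝ XH q)) q :=
    (omegaR b).hasFDerivAt.comp q hXd.hasFDerivAt
  have e2 : HasFDerivAt (fun q => fderiv ℝ H q b)
      ((ContinuousLinearMap.apply ℝ ℝ b).comp (fderiv ℝ (fderiv ℝ H) q)) q :=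
    (ContinuousLinearMap.apply ℝ ℝ b).hasFDerivAt.comp q hfd
  have hfun : (fun q => omegaR b (XH q)) = fun q => fderiv ℝ H q b := by
    funext q; rw [omegaR_apply, hXH]
  rw [hfun] at e1
  have := e1.unique e2
  have happ := congrFun (congrArg DFunLike.coe this) a
  simpa [omegaR_apply] using happ.symm ▸ (omegaR_apply b (fderiv ℝ XH q a)).symm

lemma key_skew (H : V → ℝ) (hH : ContDiff ℝ 2 H) (XH : V → V)
    (hXH : ∀ p v, stdSymplecticForm n (XH p) v = fderiv ℝ H p v) (q a b : V) :
    stdSymplecticForm n (fderiv ℝ XH q a) b + stdSymplecticForm n a (fderiv ℝ XH q b) = 0 := by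
  rw [omega_fderiv_XH H hH XH hXH, omega_skew a, omega_fderiv_XH H hH XH hXH]
  have hsymm := second_derivative_symmetric
    (f := H) (f' := fderiv ℝ H) (f'' := fderiv ℝ (fderiv ℝ H) q)
    (fun y => ((hH.differentiable (by norm_num)) y).hasFDerivAt)
    (((hH.fderiv_right le_rfl).differentiable one_ne_zero q).hasFDerivAt) a b
  rw [hsymm]; ring

end ham

section main
variable {n : ℕ}
local notation "E" => EuclideanSpace ℝ (Fin n)
local notation "V" => EuclideanSpace ℝ (Fin n) × EuclideanSpace ℝ (Fin n)

lemma intervalIntegral_clm_apply {a b : ℝ} {φ : ℝ → (V →L[ℝ] V)} (hφ : Continuous φ) (u : V) :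
    (∫ s in a..b, φ s) u = ∫ s in a..b, φ s u := by
  simp only [intervalIntegral]
  rw [ContinuousLinearMap.sub_apply,
    ContinuousLinearMap.integral_apply hφ.integrableOn_Ioc,
    ContinuousLinearMap.integral_apply hφ.integrableOn_Ioc]

set_option synthInstance.maxHeartbeats 1000000 in
set_option maxHeartbeats 1000000 in
lemma main_aux (H : V → ℝ) (hH : ContDiff ℝ 2 H) (XH : V → V)
    (hXH : ∀ p v, stdSymplecticForm n (XH p) v = fderiv ℝ H p v)
    (φ : ℝ → V → V)
    (hφreg : ContDiff ℝ 1 (fun q : ℝ × (EuclideanSpace ℝ (Fin n) × EuclideanSpace ℝ (Fin n)) => φ q.1 q.2))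
    (hφ0 : φ 0 = id)
    (hflow : ∀ t p, HasDerivAt (fun s => φ s p) (XH (φ t p)) t) :
    ∀ t p v w,
      stdSymplecticForm n (fderiv ℝ (φ t) p v) (fderiv ℝ (φ t) p w) =
        stdSymplecticForm n v w := by
  intro t₀ p v w
  set Φ : ℝ × (EuclideanSpace ℝ (Fin n) × EuclideanSpace ℝ (Fin n)) → (EuclideanSpace ℝ (Fin n) × EuclideanSpace ℝ (Fin n)) := fun q => φ q.1 q.2 with hΦdef
  have hΦd : Differentiable ℝ Φ := hφreg.differentiable one_ne_zero
  have hXC : ContDiff ℝ 1 XH := xh_smooth H hH XH hXH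
  have hXd : Differentiable ℝ XH := hXC.differentiable one_ne_zero
  have hφscont : ∀ q : V, Continuous fun s : ℝ => φ s q := fun q =>
    hφreg.continuous.comp (continuous_id.prodMk continuous_const)
  -- partial derivative in space
  have hder : ∀ (s : ℝ) (q : V), HasFDerivAt (φ s)
      ((fderiv ℝ Φ (s, q)).comp (ContinuousLinearMap.inr ℝ ℝ V)) q := by
    intro s q
    exact (hΦd (s, q)).hasFDerivAt.comp q (hasFDerivAt_prodMk_right s q)
  set D : ℝ × (EuclideanSpace ℝ (Fin n) × EuclideanSpace ℝ (Fin n)) → (V →L[ℝ] V) :=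
    fun z => (fderiv ℝ Φ z).comp (ContinuousLinearMap.inr ℝ ℝ V) with hDdef
  have hfd : ∀ (s : ℝ) (q : V), fderiv ℝ (φ s) q = D (s, q) := fun s q => (hder s q).fderiv
  have hDcont : Continuous D := (hφreg.continuous_fderiv one_ne_zero).clm_comp continuous_const
  set G : ℝ × (EuclideanSpace ℝ (Fin n) × EuclideanSpace ℝ (Fin n)) → (V →L[ℝ] V) :=
    fun z => (fderiv ℝ XH (Φ z)).comp (D z) with hGdef
  have hGcont : Continuous G :=
    ((hXC.continuous_fderiv one_ne_zero).comp hφreg.continuous).clm_comp hDcont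
  have hchain : ∀ (s : ℝ) (q : V), HasFDerivAt (fun x => XH (φ s x)) (G (s, q)) q :=
    fun s q => (hXd (φ s q)).hasFDerivAt.comp q (hder s q)
  -- integral representation of the flow
  have hrep : ∀ (t : ℝ) (q : V), φ t q = q + ∫ s in (0:ℝ)..t, XH (φ s q) := by
    intro t q
    have hcont : Continuous fun s : ℝ => XH (φ s q) := hXC.continuous.comp (hφscont q)
    have h2 := intervalIntegral.integral_eq_sub_of_hasDerivAt
      (f := fun s => φ s q) (f' := fun s => XH (φ s q))
      (fun s _ => hflow s q) (hcont.intervalIntegrable 0 t)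
    rw [h2]
    have h0 : φ 0 q = q := by rw [hφ0]; rfl
    show φ t q = q + (φ t q - φ 0 q)
    rw [h0]
    abel
  -- differentiate the representation in space
  have hparam : ∀ t : ℝ, HasFDerivAt (fun q : V => ∫ s in (0:ℝ)..t, XH (φ s q))
      (∫ s in (0:ℝ)..t, G (s, p)) p := by
    intro t
    obtain ⟨C, hC⟩ : ∃ C, ∀ z ∈ (Set.uIcc (0:ℝ) t) ×ˢ Metric.closedBall p 1, ‖G z‖ ≤ C :=
      (isCompact_uIcc.prod (isCompact_closedBall p 1)).exists_bound_of_continuousOn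
        hGcont.continuousOn
    apply intervalIntegral.hasFDerivAt_integral_of_dominated_of_fderiv_le
      (F := fun (x : V) (s : ℝ) => XH (φ s x)) (F' := fun (x : V) (s : ℝ) => G (s, x))
      (bound := fun _ => C) (s := Metric.ball p 1) (Metric.ball_mem_nhds p one_pos)
    · filter_upwards with x
      exact (hXC.continuous.comp (hφscont x)).aestronglyMeasurable
    · exact (hXC.continuous.comp (hφscont p)).intervalIntegrable 0 t
    · exact (hGcont.comp (continuous_id.prodMk continuous_const)).aestronglyMeasurable
    · filter_upwards with s
      intro hs x hx
      exact hC (s, x) ⟨Set.uIoc_subset_uIcc hs, Metric.ball_subset_closedBall hx⟩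
    · exact intervalIntegrable_const
    · filter_upwards with s
      intro hs x hx
      exact hchain s x
  -- D(t,p) as an integral in time
  have hA : ∀ t : ℝ, D (t, p) =
      ContinuousLinearMap.id ℝ (EuclideanSpace ℝ (Fin n) × EuclideanSpace ℝ (Fin n))
        + ∫ s in (0:ℝ)..t, G (s, p) := by
    intro t
    have h1 : HasFDerivAt (φ t)
        (ContinuousLinearMap.id ℝ (EuclideanSpace ℝ (Fin n) × EuclideanSpace ℝ (Fin n))
          + ∫ s in (0:ℝ)..t, G (s, p)) p := by
      have heq : (φ t) = fun q : V => q + ∫ s in (0:ℝ)..t, XH (φ s q) := funext (hrep t)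
      rw [heq]
      exact (hasFDerivAt_id p).add (hparam t)
    exact (hder t p).unique h1
  have haderiv : ∀ (u : V) (t : ℝ), HasDerivAt (fun t => D (t, p) u) (G (t, p) u) t := by
    intro u t
    have hGs : Continuous fun s : ℝ => G (s, p) :=
      hGcont.comp (continuous_id.prodMk continuous_const)
    have hint : Continuous fun s : ℝ => G (s, p) u := hGs.clm_apply continuous_const
    have h1 : HasDerivAt (fun t => ∫ s in (0:ℝ)..t, G (s, p) u) (G (t, p) u) t :=
      intervalIntegral.integral_hasDerivAt_right (hint.intervalIntegrable 0 t)
        (hint.stronglyMeasurableAtFilter _ _) hint.continuousAt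
    have heq : (fun t : ℝ => D (t, p) u) = fun t => u + ∫ s in (0:ℝ)..t, G (s, p) u := by
      funext t
      rw [hA t, ContinuousLinearMap.add_apply, ContinuousLinearMap.id_apply,
        intervalIntegral_clm_apply hGs]
    rw [heq]
    exact h1.const_add u
  -- the symplectic form along the flow is constant
  set g : ℝ → ℝ := fun t => stdSymplecticForm n (D (t, p) v) (D (t, p) w) with hgdef
  have hg : ∀ t : ℝ, HasDerivAt g 0 t := by
    intro t
    have hav := haderiv v t
    have hbw := haderiv w t
    have ha1 := hasFDerivAt_fst.comp_hasDerivAt t hav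
    have ha2 := hasFDerivAt_snd.comp_hasDerivAt t hav
    have hb1 := hasFDerivAt_fst.comp_hasDerivAt t hbw
    have hb2 := hasFDerivAt_snd.comp_hasDerivAt t hbw
    have h1 := ha1.inner ℝ hb2
    have h2 := ha2.inner ℝ hb1
    have h3 := h1.sub h2
    have hkey := key_skew H hH XH hXH (φ t p) (D (t, p) v) (D (t, p) w)
    have hGv : G (t, p) v = fderiv ℝ XH (φ t p) (D (t, p) v) := rfl
    have hGw : G (t, p) w = fderiv ℝ XH (φ t p) (D (t, p) w) := rfl
    have hgeq : g = fun t => ⟪(D (t, p) v).1, (D (t, p) w).2⟫ - ⟪(D (t, p) v).2, (D (t, p) w).1⟫ := rfl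
    rw [hgeq]
    convert h3 using 1
    · rfl
    · rfl
    · rfl
    simp only [ContinuousLinearMap.coe_fst', ContinuousLinearMap.coe_snd',
      Function.comp] at *
    simp only [stdSymplecticForm, hGv, hGw] at hkey ⊢
    linarith
  have hconst : g t₀ = g 0 :=
    is_const_of_deriv_eq_zero (fun x => (hg x).differentiableAt) (fun x => (hg x).deriv) t₀ 0
  have hD0 : D (0, p) = ContinuousLinearMap.id ℝ (EuclideanSpace ℝ (Fin n) × EuclideanSpace ℝ (Fin n)) := by
    rw [← hfd 0 p, hφ0]
    exact fderiv_id
  have hg0 : g 0 = stdSymplecticForm n v w := by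
    rw [hgdef]; simp [hD0]
  rw [hfd t₀ p]
  calc stdSymplecticForm n (D (t₀, p) v) (D (t₀, p) w) = g t₀ := rfl
    _ = g 0 := hconst
    _ = stdSymplecticForm n v w := hg0
end main

/-- Hamiltonian flows are symplectomorphisms: if `H : ℝ²ⁿ → ℝ` is `C²`, `X_H`
is its Hamiltonian vector field (characterized by `ω(X_H p, v) = dH_p(v)`),
and `φ` is a `C¹` flow of `X_H` with `φ 0 = id`, then every time-`t` map
`φ t` preserves the standard symplectic form `ω`. -/
theorem hamiltonian_flow_is_symplectomorphism (n : ℕ)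
    (H : EuclideanSpace ℝ (Fin n) × EuclideanSpace ℝ (Fin n) → ℝ)
    (hH : ContDiff ℝ 2 H)
    (XH : EuclideanSpace ℝ (Fin n) × EuclideanSpace ℝ (Fin n) →
      EuclideanSpace ℝ (Fin n) × EuclideanSpace ℝ (Fin n))
    (hXH : ∀ p v, stdSymplecticForm n (XH p) v = fderiv ℝ H p v)
    (φ : ℝ → EuclideanSpace ℝ (Fin n) × EuclideanSpace ℝ (Fin n) →
      EuclideanSpace ℝ (Fin n) × EuclideanSpace ℝ (Fin n))
    (hφreg : ContDiff ℝ 1 (fun q : ℝ ×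
      (EuclideanSpace ℝ (Fin n) × EuclideanSpace ℝ (Fin n)) => φ q.1 q.2))
    (hφ0 : φ 0 = id)
    (hflow : ∀ t p, HasDerivAt (fun s => φ s p) (XH (φ t p)) t) :
    ∀ t p v w,
      stdSymplecticForm n (fderiv ℝ (φ t) p v) (fderiv ℝ (φ t) p w) =
        stdSymplecticForm n v w :=
  main_aux H hH XH hXH φ hφreg hφ0 hflow
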